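/- Let R be a nearfield and D ⊆ R^n a set of simple vectors (vectors of weight one or two). Then D^⊥ = { x ∈ R^n : ⟨e,x⟩ = 0 for all e ∈ D } is an R-subgroup of R^n, where ⟨x,y⟩ = Σ_{i=1}^n x_i·y_i. -/

import Mathlib

open scoped BigOperators

/-- A (left) nearfield: a zero-symmetric (left) nearring whose nonzero
elements form a multiplicative group. The additive group is abelian. -/
class Nearfield (R : Type*) extends AddCommGroup R, One R, Mul R, Inv R where
  protected mul_assoc : ∀ a b c : R, a * b * c = a * (b * c)
  protected left_distrib : ∀ a b c : R, a * (b + c) = a * b + a * c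
  protected zero_mul : ∀ a : R, (0 : R) * a = 0
  protected mul_zero : ∀ a : R, a * (0 : R) = 0
  protected one_mul : ∀ a : R, (1 : R) * a = a
  protected mul_one : ∀ a : R, a * (1 : R) = a
  protected one_ne_zero : (1 : R) ≠ 0
  protected mul_inv_cancel : ∀ a : R, a ≠ 0 → a * a⁻¹ = 1
  protected inv_mul_cancel : ∀ a : R, a ≠ 0 → a⁻¹ * a = 1

namespace Nearfield

/-- A nearfield is proper if it is not a skewfield (right distributivity fails). -/
def IsProper (R : Type*) [Nearfield R] : Prop :=
  ∃ a b c : R, (a + b) * c ≠ a * c + b * c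

variable {R : Type*} [Nearfield R]

/-- Right scalar multiplication on `R^n`, applied coordinatewise. -/
def vsmul {n : ℕ} (v : Fin n → R) (r : R) : Fin n → R := fun i => v i * r

/-- An `R`-subgroup of `R^n`: an additive subgroup closed under right scalar
multiplication. -/
def IsRSubgroup {n : ℕ} (H : Set (Fin n → R)) : Prop :=
  (0 : Fin n → R) ∈ H ∧ (∀ x ∈ H, ∀ y ∈ H, x + y ∈ H) ∧
    (∀ x ∈ H, -x ∈ H) ∧ (∀ x ∈ H, ∀ r : R, vsmul x r ∈ H)

/-- `gen S` is the smallest `R`-subgroup containing `S`. -/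
def gen {n : ℕ} (S : Set (Fin n → R)) : Set (Fin n → R) :=
  ⋂₀ {H : Set (Fin n → R) | IsRSubgroup H ∧ S ⊆ H}

/-- The support of a vector. -/
def supp {n : ℕ} (u : Fin n → R) : Set (Fin n) := {i | u i ≠ 0}

/-- `dirSum u = { Σ_i u_i r_i : r_i ∈ R }`. -/
def dirSum {n ℓ : ℕ} (u : Fin ℓ → Fin n → R) : Set (Fin n → R) :=
  {v | ∃ r : Fin ℓ → R, v = ∑ i, vsmul (u i) (r i)}

/-- The "scalar product" `⟨x,y⟩ = Σ_i x_i·y_i`. -/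
def dot {n : ℕ} (x y : Fin n → R) : R := ∑ i, x i * y i

/-- The weight of a vector: the number of its nonzero coordinates. -/
noncomputable def weight {n : ℕ} (u : Fin n → R) : ℕ := (supp u).ncard

/-- A vector is simple if it has weight one or two. -/
def IsSimple {n : ℕ} (u : Fin n → R) : Prop := weight u = 1 ∨ weight u = 2

/-- The orthogonal set `D^⊥`. -/
def perp {n : ℕ} (D : Set (Fin n → R)) : Set (Fin n → R) :=
  {x | ∀ e ∈ D, dot e x = 0}

/-- `c(k,R)`: nonzero vectors of `R^k` whose first nonzero coordinate is `1`. -/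
def cSet (R : Type*) [Nearfield R] (k : ℕ) : Set (Fin k → R) :=
  {u | ∃ i : Fin k, u i = 1 ∧ ∀ j : Fin k, j < i → u j = 0}

/-- The seed number of `T`: the least size of a set generating `T`. -/
noncomputable def seed {n : ℕ} (T : Set (Fin n → R)) : ℕ :=
  sInf {k | ∃ S : Finset (Fin n → R), S.card = k ∧ gen (↑S : Set (Fin n → R)) = T}

/-- Iterated linear-combination closures. -/
def LC {n : ℕ} (S : Set (Fin n → R)) : ℕ → Set (Fin n → R)
  | 0 => S
  | m + 1 => {v | ∃ (ℓ : ℕ) (w : Fin ℓ → Fin n → R) (lam : Fin ℓ → R),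
      (∀ i, w i ∈ LC S m) ∧ v = ∑ i, vsmul (w i) (lam i)}

end Nearfield

/-- Stirling numbers of the second kind. -/
def stirling2 : ℕ → ℕ → ℕ
  | 0, 0 => 1
  | 0, _ + 1 => 0
  | _ + 1, 0 => 0
  | n + 1, k + 1 => (k + 1) * stirling2 n (k + 1) + stirling2 n k

open Nearfield

namespace Nearfield

variable {R : Type*} [Nearfield R]

lemma nf_mul_neg (a b : R) : a * (-b) = -(a * b) := by
  have h : a * b + a * (-b) = 0 := by
    rw [← Nearfield.left_distrib, add_neg_cancel, Nearfield.mul_zero]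
  exact eq_neg_of_add_eq_zero_right h

lemma nf_neg_one_mul (r : R) : (-1 : R) * r = -r := by
  have h11 : (-1 : R) * (-1) = 1 := by
    rw [nf_mul_neg, Nearfield.mul_one, neg_neg]
  by_cases h0 : (-1 : R) * r + r = 0
  · exact eq_neg_of_add_eq_zero_left h0
  · exfalso
    set u : R := (-1 : R) * r + r with hu
    have hfix : (-1 : R) * u = u := by
      rw [hu, Nearfield.left_distrib, ← Nearfield.mul_assoc, h11, Nearfield.one_mul,
        add_comm]
    have h1 : (-1 : R) = 1 := by
      have h2 := congrArg (fun z => z * u⁻¹) hfix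
      rw [Nearfield.mul_assoc, Nearfield.mul_inv_cancel u h0, Nearfield.mul_one] at h2
      exact h2
    have h3 : (1 : R) + 1 = 0 := by
      nth_rewrite 1 [← h1]; exact neg_add_cancel 1
    have h4 : r + r = 0 := by
      have : r * ((1 : R) + 1) = r + r := by
        rw [Nearfield.left_distrib, Nearfield.mul_one]
      rw [h3, Nearfield.mul_zero] at this
      exact this.symm
    apply h0
    rw [hu, h1, Nearfield.one_mul]
    exact h4

lemma nf_neg_mul (a b : R) : (-a) * b = -(a * b) := by
  have h : (-a : R) = a * (-1) := by rw [nf_mul_neg, Nearfield.mul_one]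
  rw [h, Nearfield.mul_assoc, nf_neg_one_mul, nf_mul_neg]

end Nearfield


/-- If `D` is a set of simple vectors, then `D^⊥` is an `R`-subgroup of `R^n`. -/
theorem perp_isRSubgroup {R : Type*} [Nearfield R] {n : ℕ}
    (D : Set (Fin n → R)) (hD : ∀ e ∈ D, IsSimple e) :
    IsRSubgroup (perp D) := by
  refine ⟨?_, ?_, ?_, ?_⟩
  · intro e _
    simp only [dot, Pi.zero_apply, Nearfield.mul_zero, Finset.sum_const_zero]
  · intro x hx y hy e he
    have h : dot e (x + y) = dot e x + dot e y := by
      simp only [dot, Pi.add_apply, Nearfield.left_distrib, Finset.sum_add_distrib]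
    rw [h, hx e he, hy e he, add_zero]
  · intro x hx e he
    have h : dot e (-x) = -dot e x := by
      simp only [dot, Pi.neg_apply, nf_mul_neg, Finset.sum_neg_distrib]
    rw [h, hx e he, neg_zero]
  · intro x hx r e he
    classical
    set s : Finset (Fin n) := Finset.univ.filter (fun i => e i ≠ 0) with hs
    have hmem : ∀ i, i ∈ s ↔ e i ≠ 0 := by
      intro i; simp [hs]
    have hcoe : (↑s : Set (Fin n)) = supp e := by
      ext i; simp [hs, supp]
    have hcard : s.card ≤ 2 := by
      have h1 : (↑s : Set (Fin n)).ncard = s.card := Set.ncard_coe_finset s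
      rw [hcoe] at h1
      rcases hD e he with h2 | h2 <;> rw [weight] at h2 <;> omega
    have hvan : ∀ i ∈ Finset.univ, i ∉ s → e i * x i = 0 := by
      intro i _ hi
      rw [not_iff_not.mpr (hmem i)] at hi
      push_neg at hi
      rw [hi, Nearfield.zero_mul]
    have hvan' : ∀ i ∈ Finset.univ, i ∉ s → e i * (x i * r) = 0 := by
      intro i _ hi
      rw [not_iff_not.mpr (hmem i)] at hi
      push_neg at hi
      rw [hi, Nearfield.zero_mul]
    have hsum0 : ∑ i ∈ s, e i * x i = 0 := by
      have := hx e he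
      rw [dot] at this
      rw [Finset.sum_subset s.subset_univ hvan]
      exact this
    have hgoal : dot e (vsmul x r) = ∑ i ∈ s, (e i * x i) * r := by
      rw [dot]
      simp only [vsmul]
      rw [← Finset.sum_subset s.subset_univ hvan']
      exact Finset.sum_congr rfl fun i _ => (Nearfield.mul_assoc _ _ _).symm
    rw [hgoal]
    have h2' : s.card = 0 ∨ s.card = 1 ∨ s.card = 2 := by omega
    rcases h2' with h2 | h2 | h2
    · rw [Finset.card_eq_zero] at h2
      rw [h2, Finset.sum_empty]
    · obtain ⟨i, hi⟩ := Finset.card_eq_one.mp h2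
      rw [hi, Finset.sum_singleton] at hsum0 ⊢
      rw [hsum0, Nearfield.zero_mul]
    · obtain ⟨i, j, hij, hij2⟩ := Finset.card_eq_two.mp h2
      rw [hij2, Finset.sum_pair hij] at hsum0 ⊢
      have h3 : e j * x j = -(e i * x i) := eq_neg_of_add_eq_zero_right hsum0
      rw [h3, nf_neg_mul, add_neg_cancel]
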